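/- For d ≥ 4, if (ν₁,…,ν_{d-1}) satisfies Noether's equations ∑ i²νᵢ = d² - 1 and ∑ iνᵢ = 3(d-1), is irreducible (in the sense that after the Hudson reduction step decreasing the three maximal multiplicities the inequality m₁ + m₂ ≤ d always holds, iterating until degree 2), and is not the de Jonquières type (2d-2, 0, …, 0, 1), then ∑ νᵢ ≤ d + 2. -/

import Mathlib

/-- The multiset of multiplicities associated to a multi-index `ν` in degree `d`:
the multiplicity `i` appears `ν i` times, for `1 ≤ i ≤ d - 1`. -/
def multisetOf (d : ℕ) (ν : ℕ → ℕ) : Multiset ℕ :=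
  (Finset.Icc 1 (d - 1)).val.bind fun i => Multiset.replicate (ν i) i

/-- The three largest elements of a multiset of natural numbers. -/
def topThree (M : Multiset ℕ) : ℕ × ℕ × ℕ :=
  let l := (M.sort (· ≤ ·)).reverse
  (l.headI, l.tail.headI, l.tail.tail.headI)

/-- Hudson's reduction step: remove the three maximal multiplicities `m₁ ≥ m₂ ≥ m₃`,
insert `d - m₂ - m₃`, `d - m₁ - m₃`, `d - m₁ - m₂` when positive, and replace the
degree `d` by `2d - m₁ - m₂ - m₃`. -/
def hudsonStep (d : ℕ) (M : Multiset ℕ) : ℕ × Multiset ℕ :=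
  match topThree M with
  | (m1, m2, m3) =>
    (2 * d - (m1 + m2 + m3),
      Multiset.filter (fun x => 0 < x)
        ((d - m2 - m3) ::ₘ (d - m1 - m3) ::ₘ (d - m1 - m2) ::ₘ
          ((M.erase m1).erase m2).erase m3))

/-- Hudson's irreducibility test (with fuel): at every stage of iterated reduction,
until the degree drops to `2`, the two maximal multiplicities satisfy `m₁ + m₂ ≤ d`. -/
def hudsonIrredAux : ℕ → ℕ → Multiset ℕ → Prop
  | 0, _, _ => True
  | fuel + 1, d, M =>
    if d ≤ 2 then True
    else
      match topThree M with
      | (m1, m2, _) =>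
        m1 + m2 ≤ d ∧ hudsonIrredAux fuel (hudsonStep d M).1 (hudsonStep d M).2

/-- A multi-index `ν` in degree `d` is irreducible in Hudson's sense. -/
def HudsonIrreducible (d : ℕ) (ν : ℕ → ℕ) : Prop :=
  hudsonIrredAux d d (multisetOf d ν)

lemma hudson_first {fuel d : ℕ} {M : Multiset ℕ} (h : hudsonIrredAux (fuel + 1) d M)
    (hd : ¬ d ≤ 2) :
    (M.sort (· ≤ ·)).reverse.headI + (M.sort (· ≤ ·)).reverse.tail.headI ≤ d := by
  unfold hudsonIrredAux at h
  rw [if_neg hd] at h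
  exact h.1

lemma multisetOf_sum (d : ℕ) (ν : ℕ → ℕ) :
    (multisetOf d ν).sum = ∑ i ∈ Finset.Icc 1 (d - 1), i * ν i := by
  rw [multisetOf, Multiset.sum_bind, Finset.sum]
  congr 1
  apply Multiset.map_congr rfl
  intro i _
  simp [Multiset.sum_replicate, mul_comm]

lemma multisetOf_sq_sum (d : ℕ) (ν : ℕ → ℕ) :
    ((multisetOf d ν).map fun x => x ^ 2).sum = ∑ i ∈ Finset.Icc 1 (d - 1), i ^ 2 * ν i := by
  rw [multisetOf, Multiset.map_bind, Multiset.sum_bind, Finset.sum]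
  congr 1
  apply Multiset.map_congr rfl
  intro i _
  simp [Multiset.map_replicate, Multiset.sum_replicate, mul_comm]

lemma multisetOf_card (d : ℕ) (ν : ℕ → ℕ) :
    Multiset.card (multisetOf d ν) = ∑ i ∈ Finset.Icc 1 (d - 1), ν i := by
  rw [multisetOf, Multiset.card_bind, Finset.sum]
  congr 1
  apply Multiset.map_congr rfl
  intro i _
  simp

lemma mem_multisetOf {d : ℕ} {ν : ℕ → ℕ} {x : ℕ} (hx : x ∈ multisetOf d ν) :
    1 ≤ x ∧ x ≤ d - 1 := by
  simp only [multisetOf, Multiset.mem_bind, Multiset.mem_replicate] at hx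
  obtain ⟨i, hi, -, rfl⟩ := hx
  rw [Finset.mem_val, Finset.mem_Icc] at hi
  exact hi

lemma count_multisetOf (d : ℕ) (ν : ℕ → ℕ) (i : ℕ) (hi1 : 1 ≤ i) (hi2 : i ≤ d - 1) :
    (multisetOf d ν).count i = ν i := by
  rw [multisetOf, Multiset.count_bind]
  have heq : ((Finset.Icc 1 (d - 1)).val.map fun j => Multiset.count i (Multiset.replicate (ν j) j))
      = (Finset.Icc 1 (d - 1)).val.map fun j => if j = i then ν j else 0 := by
    apply Multiset.map_congr rfl
    intro j _
    rw [Multiset.count_replicate]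
  rw [heq]
  have h := Finset.sum_ite_eq' (Finset.Icc 1 (d - 1)) i ν
  rw [Finset.sum] at h
  rw [h, if_pos (Finset.mem_Icc.2 ⟨hi1, hi2⟩)]

lemma listbound (b : ℕ) (l : List ℕ) (h : ∀ x ∈ l, 1 ≤ x ∧ x ≤ b) :
    (((l.map fun x => x ^ 2).sum : ℕ) : ℤ) + b * l.length ≤ (b + 1) * l.sum := by
  induction l with
  | nil => simp
  | cons x xs ih =>
    have hx := h x List.mem_cons_self
    have ihx := ih (fun y hy => h y (List.mem_cons_of_mem _ hy))
    simp only [List.map_cons, List.sum_cons, List.length_cons]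
    push_cast at ihx ⊢
    have h1 : (1 : ℤ) ≤ x := by exact_mod_cast hx.1
    have h2 : (x : ℤ) ≤ b := by exact_mod_cast hx.2
    nlinarith [mul_nonneg (sub_nonneg.2 h1) (sub_nonneg.2 h2)]

lemma final_ineq {A B S Q D : ℤ} (h1 : A + B + S = 3 * D - 3)
    (h2 : A ^ 2 + B ^ 2 + Q = D ^ 2 - 1) (key2 : Q + B * (D + 1) ≤ (B + 1) * S)
    (hB1 : 1 ≤ B) (hBA : B ≤ A) (hAB : A + B ≤ D) (hA2 : A ≤ D - 2) (hD : 4 ≤ D) : False := by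
  rcases le_or_gt (2 * A) D with h2a | h2a
  · nlinarith [mul_nonneg (by linarith : (0 : ℤ) ≤ A - B)
      (by linarith : (0 : ℤ) ≤ 2 * D - 5 - A),
      mul_nonneg (by linarith : (0 : ℤ) ≤ D - 2 * A)
      (by linarith : (0 : ℤ) ≤ D - 3)]
  · nlinarith [mul_nonneg (by linarith : (0 : ℤ) ≤ D - A - B)
      (by linarith : (0 : ℤ) ≤ 2 * D - 5 - A),
      mul_nonneg (by linarith : (0 : ℤ) ≤ 2 * A - D)
      (by linarith : (0 : ℤ) ≤ D - 2 - A)]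

theorem stmt_14 (d : ℕ) (hd : 4 ≤ d) (ν : ℕ → ℕ)
    (h1 : ∑ i ∈ Finset.Icc 1 (d - 1), i ^ 2 * ν i = d ^ 2 - 1)
    (h2 : ∑ i ∈ Finset.Icc 1 (d - 1), i * ν i = 3 * (d - 1))
    (hirr : HudsonIrreducible d ν)
    (hnotdJ : ¬ (ν 1 = 2 * d - 2 ∧ ν (d - 1) = 1 ∧ ∀ i, 2 ≤ i → i ≤ d - 2 → ν i = 0)) :
    ∑ i ∈ Finset.Icc 1 (d - 1), ν i ≤ d + 2 := by
  classical
  set M := multisetOf d ν with hM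
  have hmem : ∀ x ∈ M, 1 ≤ x ∧ x ≤ d - 1 := fun x hx => mem_multisetOf hx
  have hsum : M.sum = 3 * (d - 1) := by rw [hM, multisetOf_sum]; exact h2
  have hsq : (M.map fun x => x ^ 2).sum = d ^ 2 - 1 := by rw [hM, multisetOf_sq_sum]; exact h1
  have hcard : Multiset.card M = ∑ i ∈ Finset.Icc 1 (d - 1), ν i := by
    rw [hM, multisetOf_card]
  set L := M.sort (· ≤ ·) with hL
  have hLs : L.Pairwise (· ≤ ·) := Multiset.pairwise_sort _ _
  have hLM : (L : Multiset ℕ) = M := Multiset.sort_eq _ _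
  rcases el : L.reverse with _ | ⟨a, tl⟩
  · -- L = [], impossible
    have hL0 : L = [] := by
      have := congrArg List.reverse el
      simpa using this
    rw [hL0] at hLM
    rw [← hLM] at hsum
    simp at hsum
    omega
  rcases tl with _ | ⟨b, rest⟩
  · -- M = {a}, impossible
    have hL1 : L = [a] := by
      have := congrArg List.reverse el
      simpa using this
    rw [hL1] at hLM
    rw [← hLM] at hsum
    simp at hsum
    have ha := hmem a (by rw [← hLM]; simp)
    omega
  -- main case: M = a ::ₘ b ::ₘ ↑rest
  have hLrev : L = (a :: b :: rest).reverse := by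
    have := congrArg List.reverse el
    simpa using this
  have hMl : M = a ::ₘ b ::ₘ (rest : Multiset ℕ) := by
    rw [← hLM, hLrev, Multiset.coe_reverse]
    rfl
  -- ordering facts
  have hpw : (a :: b :: rest).Pairwise (fun x y => y ≤ x) := by
    rw [← el]
    exact List.pairwise_reverse.2 hLs
  have hba : b ≤ a := (List.pairwise_cons.1 hpw).1 b List.mem_cons_self
  have hrestb : ∀ x ∈ rest, x ≤ b := by
    intro x hx
    exact (List.pairwise_cons.1 (List.pairwise_cons.1 hpw).2).1 x hx
  have ha : 1 ≤ a ∧ a ≤ d - 1 := hmem a (by rw [hMl]; exact Multiset.mem_cons_self _ _)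
  have hb : 1 ≤ b ∧ b ≤ d - 1 := hmem b (by rw [hMl]; simp)
  have hrest1 : ∀ x ∈ rest, 1 ≤ x := by
    intro x hx
    exact (hmem x (by rw [hMl]; simp [hx])).1
  -- first Hudson condition
  have hirr' : hudsonIrredAux d d M := hirr
  have hfirst : a + b ≤ d := by
    have hd1 : d - 1 + 1 = d := by omega
    have h' := hudson_first (fuel := d - 1) (d := d) (M := M)
      (by rw [hd1]; exact hirr') (by omega)
    rw [← hL, el] at h'
    simpa using h'
  -- sums in terms of a, b, rest
  have hS1 : a + (b + rest.sum) = 3 * (d - 1) := by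
    rw [← hsum, hMl]
    simp [Multiset.sum_cons]
  have hS2 : a ^ 2 + (b ^ 2 + (rest.map fun x => x ^ 2).sum) = d ^ 2 - 1 := by
    rw [← hsq, hMl]
    simp [Multiset.sum_cons]
  rw [← hcard, hMl]
  simp only [Multiset.card_cons, Multiset.coe_card]
  by_contra hc
  have hlen : d + 1 ≤ rest.length := by omega
  -- case a = d - 1 : de Jonquières
  rcases Nat.lt_or_ge a (d - 1) with hadJ | hadJ
  swap
  · -- a = d - 1
    have haeq : a = d - 1 := le_antisymm ha.2 hadJ
    have hbeq : b = 1 := by omega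
    subst haeq
    subst hbeq
    have hrestone : ∀ x ∈ rest, x = 1 := by
      intro x hx
      have h3 := hrestb x hx
      have h4 := hrest1 x hx
      omega
    have hrep : rest = List.replicate rest.length 1 :=
      List.eq_replicate_length.2 hrestone
    have hrsum : rest.sum = rest.length := by
      conv_lhs => rw [hrep]
      simp
    have hlen2 : rest.length = 2 * d - 3 := by omega
    have hcnt : ∀ i, 1 ≤ i → i ≤ d - 1 → ν i = Multiset.count i M :=
      fun i hi1 hi2 => (count_multisetOf d ν i hi1 hi2).symm
    have hcrest : ∀ i, Multiset.count i (rest : Multiset ℕ) = List.count i rest := by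
      intro i
      simp [Multiset.coe_count]
    apply hnotdJ
    refine ⟨?_, ?_, ?_⟩
    · rw [hcnt 1 le_rfl (by omega), hMl, Multiset.count_cons, Multiset.count_cons,
        hcrest, hrep, List.count_replicate]
      simp only [beq_iff_eq]
      split_ifs <;> omega
    · rw [hcnt (d - 1) (by omega) le_rfl, hMl, Multiset.count_cons, Multiset.count_cons,
        hcrest, hrep, List.count_replicate]
      simp only [beq_iff_eq]
      split_ifs <;> omega
    · intro i hi1 hi2
      rw [hcnt i (by omega) (by omega), hMl, Multiset.count_cons, Multiset.count_cons,
        hcrest, hrep, List.count_replicate]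
      simp only [beq_iff_eq]
      split_ifs <;> omega
  · -- a ≤ d - 2 : counting contradiction
    have had2 : a ≤ d - 2 := by omega
    have key := listbound b rest (fun x hx => ⟨hrest1 x hx, hrestb x hx⟩)
    obtain ⟨s, hs⟩ : ∃ s, rest.sum = s := ⟨_, rfl⟩
    obtain ⟨q, hq⟩ : ∃ q, (List.map (fun x => x ^ 2) rest).sum = q := ⟨_, rfl⟩
    obtain ⟨n, hn⟩ : ∃ n, rest.length = n := ⟨_, rfl⟩
    rw [hs] at key hS1
    rw [hq] at key hS2
    rw [hn] at key hlen
    -- cast everything to ℤ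
    have hz1 : (a : ℤ) + b + s = 3 * d - 3 := by
      have h' : a + b + s + 3 = 3 * d := by omega
      have h'' := congrArg (Nat.cast : ℕ → ℤ) h'
      push_cast at h''
      linarith
    have hz2 : (a : ℤ) ^ 2 + b ^ 2 + q = d ^ 2 - 1 := by
      have hpos : 1 ≤ d ^ 2 := by nlinarith
      have h' : a ^ 2 + (b ^ 2 + q) + 1 = d ^ 2 := by
        rw [hS2]
        exact Nat.sub_add_cancel hpos
      have h'' := congrArg (Nat.cast : ℕ → ℤ) h'
      push_cast at h''
      linarith
    have hA1 : (1 : ℤ) ≤ a := by exact_mod_cast ha.1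
    have hB1 : (1 : ℤ) ≤ b := by exact_mod_cast hb.1
    have hBA : (b : ℤ) ≤ a := by exact_mod_cast hba
    have hAB : (a : ℤ) + b ≤ d := by exact_mod_cast hfirst
    have hd4 : (4 : ℤ) ≤ d := by exact_mod_cast hd
    have hA2 : (a : ℤ) ≤ d - 2 := by
      have h' : a + 2 ≤ d := by omega
      have h'' := (Nat.cast_le (α := ℤ)).2 h'
      push_cast at h''
      linarith
    have hC : ((d : ℤ) + 1) ≤ n := by exact_mod_cast hlen
    have hBC : (b : ℤ) * (d + 1) ≤ (b : ℤ) * n :=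
      mul_le_mul_of_nonneg_left hC (by linarith)
    have key2 : (q : ℤ) + (b : ℤ) * (d + 1) ≤ ((b : ℤ) + 1) * s := by linarith
    exact final_ineq hz1 hz2 key2 hB1 hBA hAB hA2 hd4
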